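/- Let n ≥ 3 and let C_n be the cycle graph of length n. Then v(J(C_n)) ≤ α₀(C_n), the minimum cardinality of a vertex cover of C_n; moreover, if n ≠ 4, then v(J(C_n)) ≤ bight(I(C_n)) − 1, where bight(I(C_n)) is the maximum cardinality of a minimal vertex cover of C_n. -/

import Mathlib

open MvPolynomial CategoryTheory

noncomputable section

/-- A set of vertices is a vertex cover if it meets every edge. -/
def IsVertexCover {V : Type} (G : SimpleGraph V) (C : Set V) : Prop :=
  ∀ ⦃u v : V⦄, G.Adj u v → u ∈ C ∨ v ∈ C

/-- A vertex cover minimal with respect to inclusion. -/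
def IsMinimalVertexCover {V : Type} (G : SimpleGraph V) (C : Set V) : Prop :=
  IsVertexCover G C ∧ ∀ C' ⊆ C, IsVertexCover G C' → C' = C

/-- `α₀(G)`: the minimum cardinality of a vertex cover of `G`. -/
def coverNumber {V : Type} (G : SimpleGraph V) : ℕ :=
  sInf {k | ∃ C : Set V, IsVertexCover G C ∧ C.ncard = k}

/-- `bight(I(G))`: the maximum cardinality of a minimal vertex cover of `G`. -/
def bigHeight {V : Type} (G : SimpleGraph V) : ℕ :=
  sSup {k | ∃ C : Set V, IsMinimalVertexCover G C ∧ C.ncard = k}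

/-- The edge ideal `I(G) ⊆ K[x_v : v ∈ V]`, generated by the monomials
`x_u * x_v` over the edges `{u,v}` of `G`. -/
def edgeIdeal (K : Type) [Field K] {V : Type} (G : SimpleGraph V) :
    Ideal (MvPolynomial V K) :=
  Ideal.span {m | ∃ u v : V, G.Adj u v ∧ m = X u * X v}

/-- The cover ideal `J(G) = ⋂_{{u,v} ∈ E(G)} ⟨x_u, x_v⟩`. -/
def coverIdeal (K : Type) [Field K] {V : Type} (G : SimpleGraph V) :
    Ideal (MvPolynomial V K) :=
  ⨅ (u : V) (v : V) (_ : G.Adj u v), Ideal.span {X u, X v}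

/-- The v-number of a graded ideal `I`: the least `d ≥ 0` such that there is a
homogeneous polynomial `f` of degree `d` with `I : f` a prime ideal. -/
def vNumber {K : Type} [Field K] {V : Type} (I : Ideal (MvPolynomial V K)) : ℕ :=
  sInf {d | ∃ f : MvPolynomial V K, f.IsHomogeneous d ∧
    (I.colon (Ideal.span {f})).IsPrime}

/-- The homogeneous maximal ideal `⟨x_1, …, x_n⟩` of the polynomial ring. -/
def maxIdeal (K : Type) [Field K] (V : Type) : Ideal (MvPolynomial V K) :=
  Ideal.span (Set.range (X : V → MvPolynomial V K))

/-- The depth of the module `M` with respect to the ideal `J`: the supremum of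
the lengths of regular sequences on `M` consisting of elements of `J`. -/
def mdepth {R : Type} [CommRing R] (J : Ideal R) (M : Type) [AddCommGroup M]
    [Module R M] : ℕ :=
  sSup {k | ∃ rs : List R, rs.length = k ∧ (∀ r ∈ rs, r ∈ J) ∧
    RingTheory.Sequence.IsRegular M rs}

/-- The projective dimension of an `R`-module `M`, characterized by the
vanishing of `Ext^i(M, N)` for all `i > d` and all modules `N`. -/
def projDim (R : Type) [CommRing R] (M : ModuleCat.{0} R) : ℕ :=
  sInf {d : ℕ | ∀ (N : ModuleCat.{0} R) (i : ℕ), d < i →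
    Subsingleton (((Ext R (ModuleCat.{0} R) i).obj (Opposite.op M)).obj N)}


namespace VNumberCycleAux
open MvPolynomial

lemma nat_mod_helper {N a b : ℕ} (hN : 2 ≤ N) (ha : a < N) (hb : b < N) :
    ((N - b) + a) % N = 1 ↔ (a = b + 1 ∨ (b + 1 = N ∧ a = 0)) := by
  rcases Nat.lt_or_ge ((N - b) + a) N with h | h
  · rw [Nat.mod_eq_of_lt h]; omega
  · rw [Nat.mod_eq_sub_mod h, Nat.mod_eq_of_lt (show N - b + a - N < N by omega)]
    omega

lemma cycle_adj_iff (m : ℕ) (u v : Fin (m+3)) :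
    (SimpleGraph.cycleGraph (m+3)).Adj u v ↔
      (u.val + 1 = v.val ∨ v.val + 1 = u.val ∨
       (u.val + 1 = m + 3 ∧ v.val = 0) ∨ (v.val + 1 = m + 3 ∧ u.val = 0)) := by
  rw [SimpleGraph.cycleGraph_adj']
  rw [Fin.sub_def, Fin.sub_def]
  simp only [Fin.val_mk]
  rw [nat_mod_helper (by omega) v.isLt u.isLt, nat_mod_helper (by omega) u.isLt v.isLt]
  have := u.isLt; have := v.isLt
  omega

/-! ### The witness cover set `S` -/

def Scyc (m : ℕ) : Finset (Fin (m+3)) :=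
  (Finset.range ((m+3)/2)).image fun j => ⟨min (2*j+2) (m+2), by omega⟩

lemma mem_Scyc {m : ℕ} {v : Fin (m+3)} :
    v ∈ Scyc m ↔ ∃ j, j < (m+3)/2 ∧ min (2*j+2) (m+2) = v.val := by
  simp [Scyc, Fin.ext_iff]

lemma Scyc_card (m : ℕ) : (Scyc m).card = (m+3)/2 := by
  rw [Scyc, Finset.card_image_of_injOn, Finset.card_range]
  intro a ha b hb h
  simp only [Finset.coe_range, Set.mem_Iio] at ha hb
  simp only [Fin.mk.injEq] at h
  omega

lemma zero_not_mem_Scyc (m : ℕ) : (0 : Fin (m+3)) ∉ Scyc m := by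
  rw [mem_Scyc]; rintro ⟨j, hj, h⟩; rw [Fin.val_zero] at h; omega

lemma one_not_mem_Scyc (m : ℕ) : (1 : Fin (m+3)) ∉ Scyc m := by
  rw [mem_Scyc]; rintro ⟨j, hj, h⟩
  have : ((1 : Fin (m+3)) : ℕ) = 1 := rfl
  omega

lemma mem_Scyc_of_val {m : ℕ} (v : Fin (m+3)) (h2 : 2 ≤ v.val)
    (h : v.val % 2 = 0 ∨ v.val + 1 = m + 3) : v ∈ Scyc m := by
  rw [mem_Scyc]
  have := v.isLt
  rcases h with h | h
  · exact ⟨(v.val - 2)/2, by omega, by omega⟩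
  · exact ⟨(m+3)/2 - 1, by omega, by omega⟩

lemma edge_cover {m : ℕ} {u v : Fin (m+3)}
    (h : (SimpleGraph.cycleGraph (m+3)).Adj u v) :
    u ∈ Scyc m ∨ v ∈ Scyc m ∨ (u.val = 0 ∧ v.val = 1) ∨ (u.val = 1 ∧ v.val = 0) := by
  rw [cycle_adj_iff] at h
  have hu := u.isLt; have hv := v.isLt
  rcases h with h | h | h | h
  · by_cases h0 : u.val = 0
    · right; right; left; omega
    · by_cases he : u.val % 2 = 0
      · exact Or.inl (mem_Scyc_of_val u (by omega) (Or.inl he))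
      · exact Or.inr (Or.inl (mem_Scyc_of_val v (by omega) (Or.inl (by omega))))
  · by_cases h0 : v.val = 0
    · right; right; right; omega
    · by_cases he : v.val % 2 = 0
      · exact Or.inr (Or.inl (mem_Scyc_of_val v (by omega) (Or.inl he)))
      · exact Or.inl (mem_Scyc_of_val u (by omega) (Or.inl (by omega)))
  · exact Or.inl (mem_Scyc_of_val u (by omega) (Or.inr (by omega)))
  · exact Or.inr (Or.inl (mem_Scyc_of_val v (by omega) (Or.inr (by omega))))

/-! ### The prime ideal `⟨X a, X b⟩` -/

noncomputable def killAB (K : Type) [Field K] {V : Type} [DecidableEq V] (a b : V) :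
    MvPolynomial V K →+* MvPolynomial V K :=
  (aeval (fun i => if i = a ∨ i = b then 0 else X i) :
    MvPolynomial V K →ₐ[K] MvPolynomial V K).toRingHom

variable {K : Type} [Field K] {V : Type} [DecidableEq V]

lemma killAB_X_of_mem (a b i : V) (h : i = a ∨ i = b) : killAB K a b (X i) = 0 := by
  simp [killAB, h]

lemma killAB_X_of_not_mem (a b i : V) (h : ¬(i = a ∨ i = b)) :
    killAB K a b (X i) = X i := by
  simp [killAB, h]

lemma sub_killAB_mem (a b : V) (p : MvPolynomial V K) :
    p - killAB K a b p ∈ Ideal.span {X a, X b} := by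
  induction p using MvPolynomial.induction_on with
  | C c => simp [killAB]
  | add p q hp hq =>
      have := add_mem hp hq
      convert this using 1
      rw [map_add]; ring
  | mul_X p i hp =>
      by_cases hi : i = a ∨ i = b
      · rw [map_mul, killAB_X_of_mem a b i hi, mul_zero, sub_zero]
        refine Ideal.mul_mem_left _ p (Ideal.subset_span ?_)
        rcases hi with rfl | rfl <;> simp
      · rw [map_mul, killAB_X_of_not_mem a b i hi]
        have := Ideal.mul_mem_right (X i) _ hp
        convert this using 1
        ring

lemma span_pair_eq_ker (a b : V) :
    Ideal.span {X a, X b} = RingHom.ker (killAB K a b) := by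
  apply le_antisymm
  · rw [Ideal.span_le]
    rintro x hx
    rcases hx with rfl | hx
    · simp [RingHom.mem_ker, killAB_X_of_mem a b a (Or.inl rfl)]
    · rcases hx with rfl
      simp [RingHom.mem_ker, killAB_X_of_mem a b b (Or.inr rfl)]
  · intro p hp
    rw [RingHom.mem_ker] at hp
    have := sub_killAB_mem a b p
    rwa [hp, sub_zero] at this

lemma span_pair_X_isPrime (a b : V) :
    (Ideal.span {X a, X b} : Ideal (MvPolynomial V K)).IsPrime := by
  rw [span_pair_eq_ker]
  exact RingHom.ker_isPrime _

/-! ### The witness polynomial -/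

noncomputable def fS (K : Type) [Field K] (m : ℕ) : MvPolynomial (Fin (m+3)) K :=
  ∏ i ∈ Scyc m, X i

lemma fS_not_mem (m : ℕ) :
    fS K m ∉ (Ideal.span {X 0, X 1} : Ideal (MvPolynomial (Fin (m+3)) K)) := by
  rw [span_pair_eq_ker, RingHom.mem_ker]
  have : killAB K (0 : Fin (m+3)) 1 (fS K m) = fS K m := by
    rw [fS, map_prod]
    apply Finset.prod_congr rfl
    intro i hi
    apply killAB_X_of_not_mem
    rintro (rfl | rfl)
    · exact zero_not_mem_Scyc m hi
    · exact one_not_mem_Scyc m hi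
  rw [this, fS]
  exact Finset.prod_ne_zero_iff.mpr fun i _ => X_ne_zero i

lemma fS_mem_edge {m : ℕ} {u v : Fin (m+3)} (h : u ∈ Scyc m) :
    fS K m ∈ (Ideal.span {X u, X v} : Ideal (MvPolynomial (Fin (m+3)) K)) := by
  rw [fS, ← Finset.mul_prod_erase _ _ h]
  exact Ideal.mul_mem_right _ _ (Ideal.subset_span (by simp))

lemma adj01 (m : ℕ) : (SimpleGraph.cycleGraph (m+3)).Adj 0 1 := by
  rw [cycle_adj_iff]
  left
  simp

lemma val_eq_zero {m : ℕ} {u : Fin (m+3)} (h : u.val = 0) : u = 0 := by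
  apply Fin.ext; simpa using h

lemma val_eq_one {m : ℕ} {u : Fin (m+3)} (h : u.val = 1) : u = 1 := by
  apply Fin.ext; simpa using h

lemma fS_homogeneous (m : ℕ) : (fS K m).IsHomogeneous ((m+3)/2) := by
  rw [← Scyc_card m]
  have h := MvPolynomial.IsHomogeneous.prod (Scyc m) (fun i => (X i : MvPolynomial (Fin (m+3)) K))
    (fun _ => 1) (fun i _ => MvPolynomial.isHomogeneous_X K i)
  rw [Finset.sum_const, smul_eq_mul, mul_one] at h
  exact h

lemma colon_eq (m : ℕ) :
    (coverIdeal K (SimpleGraph.cycleGraph (m+3))).colon (Ideal.span {fS K m}) =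
      Ideal.span {X 0, X 1} := by
  apply le_antisymm
  · intro g hg
    rw [Ideal.mem_colon_span_singleton] at hg
    simp only [coverIdeal, Submodule.mem_iInf] at hg
    have h01 := hg 0 1 (adj01 m)
    have hprime := span_pair_X_isPrime (K := K) (0 : Fin (m+3)) 1
    rcases hprime.mem_or_mem h01 with h | h
    · exact h
    · exact absurd h (fS_not_mem m)
  · intro g hg
    rw [Ideal.mem_colon_span_singleton]
    simp only [coverIdeal, Submodule.mem_iInf]
    intro u v huv
    rcases edge_cover huv with h | h | ⟨h0, h1⟩ | ⟨h0, h1⟩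
    · exact Ideal.mul_mem_left _ g (fS_mem_edge h)
    · rw [show ({X u, X v} : Set (MvPolynomial (Fin (m+3)) K)) = {X v, X u} from
        Set.pair_comm _ _]
      exact Ideal.mul_mem_left _ g (fS_mem_edge h)
    · rw [val_eq_zero h0, val_eq_one h1]
      exact Ideal.mul_mem_right _ _ hg
    · rw [val_eq_one h0, val_eq_zero h1,
        show ({X 1, X 0} : Set (MvPolynomial (Fin (m+3)) K)) = {X 0, X 1} from
          Set.pair_comm _ _]
      exact Ideal.mul_mem_right _ _ hg

/-! ### Lower bound for covers -/

lemma adj_succ (m : ℕ) (i : Fin (m+3)) : (SimpleGraph.cycleGraph (m+3)).Adj i (i+1) := by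
  rw [cycle_adj_iff]
  have hi := i.isLt
  have hv : ((i + 1 : Fin (m+3))).val = (i.val + 1) % (m+3) := by
    rw [Fin.add_def]
    simp [Fin.val_one]
  rcases Nat.lt_or_ge (i.val + 1) (m+3) with h | h
  · left; rw [hv, Nat.mod_eq_of_lt h]
  · right; right; left
    constructor
    · omega
    · rw [hv]
      have : i.val + 1 = m + 3 := by omega
      rw [this, Nat.mod_self]

lemma cover_card_bound (m : ℕ) (C : Set (Fin (m+3)))
    (hC : IsVertexCover (SimpleGraph.cycleGraph (m+3)) C) : m + 3 ≤ 2 * C.ncard := by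
  classical
  set e : Fin (m+3) → Fin (m+3) := fun i => if i ∈ C then i else i + 1 with he
  have he1 : ∀ i, e i ∈ C := by
    intro i
    by_cases h : i ∈ C
    · simpa [he, h]
    · rcases hC (adj_succ m i) with h' | h'
      · exact absurd h' h
      · simpa [he, h]
  have he2 : ∀ i, e i = i ∨ e i = i + 1 := by
    intro i
    by_cases h : i ∈ C <;> simp [he, h]
  have hfin : C.Finite := Set.toFinite C
  have hsub : (Finset.univ : Finset (Fin (m+3))).card ≤ 2 * hfin.toFinset.card := by
    refine Finset.card_le_mul_card_image_of_maps_to (f := e) (t := hfin.toFinset) ?_ 2 ?_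
    · intro a _; simpa using he1 a
    · intro v _
      calc (Finset.univ.filter (fun i => e i = v)).card
          ≤ ({v, v - 1} : Finset (Fin (m+3))).card := by
            apply Finset.card_le_card
            intro i hi
            simp only [Finset.mem_filter] at hi
            rcases he2 i with h | h
            · simp [← hi.2, h]
            · have : i = v - 1 := by rw [← hi.2, h]; exact (add_sub_cancel_right i 1).symm
              simp [this]
        _ ≤ 2 := Finset.card_insert_le _ _ |>.trans (by simp)
  have hcard : (Finset.univ : Finset (Fin (m+3))).card = m + 3 := by simp
  rw [Set.ncard_eq_toFinset_card C hfin]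
  omega

/-! ### A big minimal cover -/

def Dset (m : ℕ) : Set (Fin (m+3)) :=
  {v | (v.val % 3 = 0 ∧ v.val + 1 ≠ m + 3) ∨ ((m + 3) % 3 = 1 ∧ v.val + 2 = m + 3)}

lemma Dset_indep {m : ℕ} {u v : Fin (m+3)}
    (h : (SimpleGraph.cycleGraph (m+3)).Adj u v) : u ∉ Dset m ∨ v ∉ Dset m := by
  rw [cycle_adj_iff] at h
  by_contra hc
  push_neg at hc
  obtain ⟨hu, hv⟩ := hc
  simp only [Dset, Set.mem_setOf_eq] at hu hv
  have h3 := u.isLt; have h4 := v.isLt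
  rcases hu with ⟨hu1, hu2⟩ | ⟨hu1, hu2⟩ <;> rcases hv with ⟨hv1, hv2⟩ | ⟨hv1, hv2⟩ <;>
    rcases h with h | h | ⟨h, h'⟩ | ⟨h, h'⟩ <;> omega

lemma Dset_dominates {m : ℕ} (v : Fin (m+3)) (hv : v ∉ Dset m) :
    ∃ w : Fin (m+3), (SimpleGraph.cycleGraph (m+3)).Adj v w ∧ w ∈ Dset m := by
  simp only [Dset, Set.mem_setOf_eq] at hv
  push_neg at hv
  obtain ⟨hv1, hv2⟩ := hv
  have ha := v.isLt
  by_cases h1 : v.val % 3 = 1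
  · refine ⟨⟨v.val - 1, by omega⟩, ?_, Or.inl ⟨by (try simp only [Fin.val_mk]) <;> omega,
      by (try simp only [Fin.val_mk]) <;> omega⟩⟩
    rw [cycle_adj_iff]
    exact Or.inr (Or.inl (by (try simp only [Fin.val_mk]) <;> omega))
  · by_cases h2 : v.val % 3 = 2
    · by_cases h3 : v.val + 1 = m + 3
      · refine ⟨⟨0, by omega⟩, ?_, Or.inl ⟨by (try simp only [Fin.val_mk]) <;> omega,
          by (try simp only [Fin.val_mk]) <;> omega⟩⟩
        rw [cycle_adj_iff]
        exact Or.inr (Or.inr (Or.inl ⟨by omega, rfl⟩))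
      · by_cases h4 : v.val + 2 = m + 3
        · exact absurd (hv2 (by omega)) (by omega)
        · refine ⟨⟨v.val + 1, by omega⟩, ?_, Or.inl ⟨by (try simp only [Fin.val_mk]) <;> omega,
            by (try simp only [Fin.val_mk]) <;> omega⟩⟩
          rw [cycle_adj_iff]
          exact Or.inl (by (try simp only [Fin.val_mk]) <;> omega)
    · have h0 : v.val % 3 = 0 := by omega
      have h3 : v.val + 1 = m + 3 := hv1 h0
      refine ⟨⟨v.val - 1, by omega⟩, ?_, Or.inr ⟨by (try simp only [Fin.val_mk]) <;> omega,
        by (try simp only [Fin.val_mk]) <;> omega⟩⟩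
      rw [cycle_adj_iff]
      exact Or.inr (Or.inl (by (try simp only [Fin.val_mk]) <;> omega))

lemma Dset_ncard (m : ℕ) : (Dset m).ncard ≤ (m + 5) / 3 := by
  have hinj : Set.InjOn (fun v : Fin (m+3) => (v.val + 1) / 3) (Dset m) := by
    intro x hx y hy h
    simp only [Dset, Set.mem_setOf_eq] at hx hy
    have hx' := x.isLt; have hy' := y.isLt
    apply Fin.ext
    simp only at h
    rcases hx with ⟨hx1, hx2⟩ | ⟨hx1, hx2⟩ <;> rcases hy with ⟨hy1, hy2⟩ | ⟨hy1, hy2⟩ <;> omega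
  have himg : (fun v : Fin (m+3) => (v.val + 1) / 3) '' (Dset m) ⊆
      ↑(Finset.range ((m + 5) / 3)) := by
    rintro k ⟨v, hv, rfl⟩
    simp only [Finset.coe_range, Set.mem_Iio]
    simp only [Dset, Set.mem_setOf_eq] at hv
    have := v.isLt
    rcases hv with ⟨h1, h2⟩ | ⟨h1, h2⟩ <;> omega
  calc (Dset m).ncard = ((fun v : Fin (m+3) => (v.val + 1) / 3) '' (Dset m)).ncard :=
        (Set.ncard_image_of_injOn hinj).symm
    _ ≤ (↑(Finset.range ((m + 5) / 3)) : Set ℕ).ncard :=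
        Set.ncard_le_ncard himg (Finset.finite_toSet _)
    _ = (m + 5) / 3 := by rw [Set.ncard_coe_finset, Finset.card_range]

lemma compl_Dset_ncard (m : ℕ) (hm : m ≠ 1) : (m + 3) / 2 + 1 ≤ (Dset m)ᶜ.ncard := by
  have h := Set.ncard_add_ncard_compl (Dset m)
  rw [Nat.card_eq_fintype_card, Fintype.card_fin] at h
  have h2 := Dset_ncard m
  omega

lemma compl_Dset_minimal (m : ℕ) :
    IsMinimalVertexCover (SimpleGraph.cycleGraph (m+3)) (Dset m)ᶜ := by
  constructor
  · intro u v huv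
    rcases Dset_indep huv with h | h
    · exact Or.inl h
    · exact Or.inr h
  · intro C' hsub hcov
    apply Set.Subset.antisymm hsub
    intro v hv
    obtain ⟨w, hadj, hw⟩ := Dset_dominates v hv
    rcases hcov hadj with h | h
    · exact h
    · exact absurd (hsub h) (by simpa using hw)

end VNumberCycleAux

/-- For the cycle `C_n` (`n ≥ 3`), `v(J(C_n)) ≤ α₀(C_n)`; moreover, if
`n ≠ 4` then `v(J(C_n)) ≤ bight(I(C_n)) - 1`. -/
theorem vNumber_coverIdeal_cycleGraph_le
    {K : Type} [Field K] (n : ℕ) (hn : 3 ≤ n) :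
    vNumber (coverIdeal K (SimpleGraph.cycleGraph n)) ≤
      coverNumber (SimpleGraph.cycleGraph n) ∧
    (n ≠ 4 → vNumber (coverIdeal K (SimpleGraph.cycleGraph n)) ≤
      bigHeight (SimpleGraph.cycleGraph n) - 1) := by
  obtain ⟨m, rfl⟩ : ∃ m, n = m + 3 := ⟨n - 3, by omega⟩
  have hv : vNumber (coverIdeal K (SimpleGraph.cycleGraph (m+3))) ≤ (m+3)/2 := by
    apply Nat.sInf_le
    exact ⟨VNumberCycleAux.fS K m, VNumberCycleAux.fS_homogeneous m, by
      rw [VNumberCycleAux.colon_eq m]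
      exact VNumberCycleAux.span_pair_X_isPrime 0 1⟩
  constructor
  · refine hv.trans (le_csInf ?_ ?_)
    · exact ⟨(Set.univ : Set (Fin (m+3))).ncard, Set.univ,
        fun u v _ => Or.inl trivial, rfl⟩
    · rintro k ⟨C, hC, rfl⟩
      have := VNumberCycleAux.cover_card_bound m C hC
      omega
  · intro hne
    have hm : m ≠ 1 := by omega
    have hb : (m+3)/2 + 1 ≤ bigHeight (SimpleGraph.cycleGraph (m+3)) := by
      have hmem : (VNumberCycleAux.Dset m)ᶜ.ncard ∈
          {k | ∃ C : Set (Fin (m+3)),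
            IsMinimalVertexCover (SimpleGraph.cycleGraph (m+3)) C ∧ C.ncard = k} :=
        ⟨(VNumberCycleAux.Dset m)ᶜ, VNumberCycleAux.compl_Dset_minimal m, rfl⟩
      have hbdd : BddAbove {k | ∃ C : Set (Fin (m+3)),
          IsMinimalVertexCover (SimpleGraph.cycleGraph (m+3)) C ∧ C.ncard = k} := by
        refine ⟨m + 3, ?_⟩
        rintro k ⟨C, _, rfl⟩
        have : C.ncard ≤ (Set.univ : Set (Fin (m+3))).ncard :=
          Set.ncard_le_ncard (Set.subset_univ C) Set.finite_univ
        simpa [Set.ncard_univ, Nat.card_eq_fintype_card] using this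
      calc (m+3)/2 + 1 ≤ (VNumberCycleAux.Dset m)ᶜ.ncard :=
            VNumberCycleAux.compl_Dset_ncard m hm
        _ ≤ bigHeight (SimpleGraph.cycleGraph (m+3)) := le_csSup hbdd hmem
    omega

end
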